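/- arXiv:1404.4626 — 3 statements merged into one kernel-verified Lean document; each statement's English description precedes it below -/
import Mathlib

section
/- Let G be a countable group, μ a probability measure on G, X a G-space with a μ-stationary probability measure ν, D a countable G-set, and Θ : X → D a measurable G-equivariant map. If E ⊆ X is a G-invariant measurable subset with ν(E) > 0, then Θ(E) contains a finite orbit of the subgroup of G generated by the support of μ. -/
open scoped Pointwise
open MeasureTheory

lemma aux_inv_maps {G D : Type*} [Group G] [MulAction G D] {S : Set D}
    (hS : S.Finite) (h : G) (hmaps : ∀ d ∈ S, h • d ∈ S) :
    ∀ d ∈ S, h⁻¹ • d ∈ S := by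
  have hbij : Set.BijOn (fun d => h • d) S S :=
    (hS.injOn_iff_bijOn_of_mapsTo hmaps).mp
      (fun a _ b _ hab => by simpa using smul_left_cancel h hab)
  intro d hd
  obtain ⟨x, hx, hxd⟩ := hbij.surjOn hd
  simp only at hxd
  have : x = h⁻¹ • d := by rw [← hxd]; simp
  rwa [← this]

/-- Let G be a countable group, μ a probability measure on G, X a G-space with a
μ-stationary probability measure ν, D a countable G-set, and Θ : X → D a measurable
G-equivariant map. If E ⊆ X is a G-invariant measurable subset with ν(E) > 0, then Θ(E)
contains a finite orbit of the subgroup of G generated by the support of μ. -/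
theorem stmt0 {G X D : Type*} [Group G] [Countable G] [Countable D]
    [MulAction G X] [MulAction G D] [MeasurableSpace X]
    [MeasurableSpace D] [MeasurableSingletonClass D]
    (μ : G → ENNReal) (hμ : ∑' g : G, μ g = 1)
    (ν : Measure X) [IsProbabilityMeasure ν]
    (hstat : ∀ E : Set X, MeasurableSet E → ν E = ∑' g : G, μ g * ν (g⁻¹ • E))
    (Θ : X → D) (hΘmeas : Measurable Θ)
    (hΘequiv : ∀ (g : G) (x : X), Θ (g • x) = g • Θ x)
    (E : Set X) (hE : MeasurableSet E) (hEinv : ∀ g : G, g • E = E) (hpos : 0 < ν E) :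
    ∃ x : D, {d : D | ∃ h ∈ Subgroup.closure {g : G | μ g ≠ 0}, h • x = d} ⊆ Θ '' E ∧
      {d : D | ∃ h ∈ Subgroup.closure {g : G | μ g ≠ 0}, h • x = d}.Finite := by
  classical
  set m : D → ENNReal := fun d => ν (E ∩ Θ ⁻¹' {d}) with hm
  have hmeasd : ∀ d : D, MeasurableSet (E ∩ Θ ⁻¹' {d}) :=
    fun d => hE.inter (hΘmeas (measurableSet_singleton d))
  -- total mass
  have hsum : ∑' d : D, m d = ν E := by
    rw [← measure_iUnion (fun a b hab => by
        simp only [Set.disjoint_left]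
        rintro x ⟨-, hxa⟩ ⟨-, hxb⟩
        exact hab (by rw [← hxa, ← hxb]
          )) hmeasd]
    congr 1
    ext x
    simp
  have hsum_ne_top : ∑' d : D, m d ≠ ⊤ := by
    rw [hsum]; exact (measure_lt_top ν E).ne
  -- sup
  set M : ENNReal := ⨆ d : D, m d with hM
  have hle : ∀ d, m d ≤ M := fun d => le_iSup m d
  have hM_ne_top : M ≠ ⊤ := by
    have h1 : M ≤ ∑' d : D, m d := iSup_le fun d => ENNReal.le_tsum d
    exact fun h => hsum_ne_top (top_le_iff.mp (h ▸ h1))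
  have hM_pos : 0 < M := by
    by_contra h
    push_neg at h
    have : ∀ d, m d = 0 := fun d => le_antisymm ((hle d).trans h) zero_le
    have : ν E = 0 := by rw [← hsum]; simp [this]
    exact hpos.ne' this
  -- sup is attained
  have hattain : ∃ d₀ : D, m d₀ = M := by
    have hfin : {d : D | M / 2 ≤ m d}.Finite :=
      ENNReal.finite_const_le_of_tsum_ne_top hsum_ne_top
        (by simp [ENNReal.div_eq_zero_iff, hM_pos.ne'])
    have hhalf : M / 2 < M := ENNReal.half_lt_self hM_pos.ne' hM_ne_top
    obtain ⟨d₁, hd₁⟩ : ∃ d, M / 2 < m d := by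
      by_contra h
      push_neg at h
      exact absurd (iSup_le h) (not_le.mpr hhalf)
    have hne : {d : D | M / 2 ≤ m d}.Nonempty := ⟨d₁, hd₁.le⟩
    obtain ⟨d₀, hd₀mem, hd₀max⟩ := Set.Finite.exists_maximalFor m _ hfin hne
    refine ⟨d₀, le_antisymm (hle d₀) (iSup_le fun d => ?_)⟩
    rcases le_or_gt (M / 2) (m d) with h | h
    · rcases le_or_gt (m d) (m d₀) with h' | h'
      · exact h'
      · exact hd₀max h h'.le
    · exact h.le.trans hd₀mem
  obtain ⟨d₀, hd₀⟩ := hattain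
  -- stationarity for m
  have hstat' : ∀ d : D, m d = ∑' g : G, μ g * m (g⁻¹ • d) := by
    intro d
    have := hstat (E ∩ Θ ⁻¹' {d}) (hmeasd d)
    rw [hm]
    simp only
    rw [this]
    congr 1
    ext g
    congr 2
    ext x
    rw [Set.mem_inv_smul_set_iff]
    constructor
    · rintro ⟨hxE, hxΘ⟩
      have hxE' : x ∈ E := by
        rw [← hEinv g⁻¹]; exact ⟨g • x, hxE, by simp⟩
      refine ⟨hxE', ?_⟩
      simp only [Set.mem_preimage, Set.mem_singleton_iff] at hxΘ ⊢
      rw [hΘequiv] at hxΘ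
      rw [← hxΘ]; simp
    · rintro ⟨hxE, hxΘ⟩
      have hxE' : g • x ∈ E := by rw [← hEinv g]; exact Set.smul_mem_smul_set hxE
      refine ⟨hxE', ?_⟩
      simp only [Set.mem_preimage, Set.mem_singleton_iff] at hxΘ ⊢
      rw [hΘequiv, hxΘ]; simp
  have hμ_ne_top : ∀ g, μ g ≠ ⊤ := fun g =>
    ((ENNReal.le_tsum g).trans_eq hμ).trans_lt (by norm_num) |>.ne
  -- maximal set S
  set S : Set D := {d : D | m d = M} with hS
  have hSfin : S.Finite := by
    have : S ⊆ {d : D | M ≤ m d} := fun d hd => hd.ge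
    exact (ENNReal.finite_const_le_of_tsum_ne_top hsum_ne_top hM_pos.ne').subset this
  have hSinv : ∀ g : G, μ g ≠ 0 → ∀ d ∈ S, g⁻¹ • d ∈ S := by
    intro g hg d hd
    by_contra hcon
    have hlt : m (g⁻¹ • d) < M := lt_of_le_of_ne (hle _) hcon
    have hfne : ∑' g' : G, μ g' * m (g'⁻¹ • d) ≠ ⊤ := by
      rw [← hstat' d]; exact (measure_lt_top ν _).ne
    have : ∑' g' : G, μ g' * m (g'⁻¹ • d) < ∑' g' : G, μ g' * M :=
      ENNReal.tsum_lt_tsum (i := g) hfne (fun g' => mul_le_mul_right (hle _) _)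
        (ENNReal.mul_lt_mul_right hg (hμ_ne_top g) hlt)
    rw [← hstat' d, hd, ENNReal.tsum_mul_right, hμ, one_mul] at this
    exact lt_irrefl _ this
  -- S closed under closure subgroup
  have hSclosed : ∀ h ∈ Subgroup.closure {g : G | μ g ≠ 0}, ∀ d ∈ S, h • d ∈ S := by
    intro h hh
    induction hh using Subgroup.closure_induction with
    | mem g hg =>
      intro d hd
      have := aux_inv_maps hSfin g⁻¹ (hSinv g hg) d hd
      simpa using this
    | one => intro d hd; simpa using hd
    | mul a b _ _ ha hb => intro d hd; rw [mul_smul]; exact ha _ (hb d hd)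
    | inv a _ ha => exact aux_inv_maps hSfin a ha
  refine ⟨d₀, ?_, ?_⟩
  · rintro d ⟨h, hh, rfl⟩
    have hmem : h • d₀ ∈ S := hSclosed h hh d₀ hd₀
    have hmval : m (h • d₀) = M := hmem
    have hpos' : m (h • d₀) ≠ 0 := by rw [hmval]; exact hM_pos.ne'
    obtain ⟨x, hxE, hxΘ⟩ := MeasureTheory.nonempty_of_measure_ne_zero hpos'
    exact ⟨x, hxE, hxΘ⟩
  · refine hSfin.subset ?_
    rintro d ⟨h, hh, rfl⟩
    exact hSclosed h hh d₀ hd₀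
end

section
/- Let T be an ℝ-tree and g an isometry of T with a fixed point. If there exist two hyperbolic isometries h and h′ of T such that ‖gh‖ ≤ ‖h‖, ‖gh′‖ ≤ ‖h′‖, and ‖hh′‖ > ‖h‖ + ‖h′‖, then g fixes an arc (a nondegenerate segment) of T. Conversely, if g fixes an arc of T and there exist hyperbolic isometries h, h′ whose axes meet the fixed point set of g but are disjoint from each other, then these three translation-length inequalities hold. -/
/-- A metric space is an ℝ-tree if it is geodesic and 0-hyperbolic (four-point condition);
equivalently, any two points are joined by a unique arc, which is isometric to a segment. -/
def IsRTree (T : Type*) [MetricSpace T] : Prop :=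
  (∀ x y : T, ∃ f : ℝ → T, f 0 = x ∧ f (dist x y) = y ∧
      ∀ s ∈ Set.Icc (0 : ℝ) (dist x y), ∀ t ∈ Set.Icc (0 : ℝ) (dist x y),
        dist (f s) (f t) = |s - t|) ∧
  ∀ x y z w : T, dist x y + dist z w ≤ max (dist x z + dist y w) (dist x w + dist y z)

/-- The translation length ‖φ‖ = inf_x d(x, φ x) of an isometry φ. -/
noncomputable def transLen {T : Type*} [MetricSpace T] (φ : T ≃ᵢ T) : ℝ :=
  ⨅ x : T, dist x (φ x)

/-- The axis (characteristic set) of an isometry: the set of points moved a minimal distance. -/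
def axisSet {T : Type*} [MetricSpace T] (φ : T ≃ᵢ T) : Set T :=
  {x : T | dist x (φ x) = transLen φ}

/-- An isometry of an ℝ-tree is hyperbolic if its translation length is positive. -/
def IsHyperbolicIsom {T : Type*} [MetricSpace T] (φ : T ≃ᵢ T) : Prop :=
  0 < transLen φ

namespace RTreeAux

variable {T : Type*} [MetricSpace T]

/-- Gromov product with apex `w`. -/
noncomputable def gp (w x y : T) : ℝ := (dist w x + dist w y - dist x y) / 2

/-- `y` lies between `x` and `z`. -/
def Btw (x y z : T) : Prop := dist x z = dist x y + dist y z

lemma gp_nonneg (w x y : T) : 0 ≤ gp w x y := by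
  have h := dist_triangle x w y
  have c1 : dist x w = dist w x := dist_comm x w
  unfold gp; linarith

lemma gp_le_left (w x y : T) : gp w x y ≤ dist w x := by
  have h := dist_triangle w x y
  unfold gp; linarith

lemma gp_le_right (w x y : T) : gp w x y ≤ dist w y := by
  have h := dist_triangle w y x
  have c : dist y x = dist x y := dist_comm y x
  unfold gp; linarith

lemma hyp4 (ht : IsRTree T) (w x y r : T) : min (gp w x r) (gp w r y) ≤ gp w x y := by
  have h := ht.2 x y r w
  have c1 : dist r w = dist w r := dist_comm r w
  have c2 : dist x w = dist w x := dist_comm x w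
  have c3 : dist y w = dist w y := dist_comm y w
  have c4 : dist y r = dist r y := dist_comm y r
  rcases le_total (dist x r + dist y w) (dist x w + dist y r) with hc | hc
  · rw [max_eq_right hc] at h
    refine le_trans (min_le_right _ _) ?_
    unfold gp; linarith
  · rw [max_eq_left hc] at h
    refine le_trans (min_le_left _ _) ?_
    unfold gp; linarith

lemma min_zero_cases {a b : ℝ} (ha : 0 ≤ a) (hb : 0 ≤ b) (h : min a b ≤ 0) :
    a = 0 ∨ b = 0 := by
  rcases le_total a b with h' | h'
  · left; rw [min_eq_left h'] at h; linarith
  · right; rw [min_eq_right h'] at h; linarith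

lemma btw_symm {x y z : T} (h : Btw x y z) : Btw z y x := by
  unfold Btw at *
  rw [dist_comm z x, dist_comm z y, dist_comm y x]; linarith

lemma btw_triv_left (x z : T) : Btw x x z := by
  unfold Btw; rw [dist_self]; ring

lemma btw_triv_right (x z : T) : Btw x z z := by
  unfold Btw; rw [dist_self]; ring

lemma btw_map (φ : T ≃ᵢ T) {x y z : T} (h : Btw x y z) : Btw (φ x) (φ y) (φ z) := by
  unfold Btw at *
  rw [φ.dist_eq, φ.dist_eq, φ.dist_eq]; exact h

lemma collinear (ht : IsRTree T) {a m₁ m₂ y : T}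
    (h₁ : Btw a m₁ y) (h₂ : Btw a m₂ y) (hle : dist a m₁ ≤ dist a m₂) :
    Btw a m₁ m₂ := by
  have h4 := hyp4 ht a m₁ m₂ y
  have e₁ : gp a m₁ y = dist a m₁ := by
    unfold Btw at h₁; unfold gp; linarith
  have e₂ : gp a y m₂ = dist a m₂ := by
    unfold Btw at h₂
    have c : dist y m₂ = dist m₂ y := dist_comm y m₂
    unfold gp; linarith
  rw [e₁, e₂, min_eq_left hle] at h4
  have tri : dist a m₂ ≤ dist a m₁ + dist m₁ m₂ := dist_triangle a m₁ m₂
  unfold gp at h4; unfold Btw; linarith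

lemma unique_between (ht : IsRTree T) {a m₁ m₂ y : T}
    (h₁ : Btw a m₁ y) (h₂ : Btw a m₂ y) (heq : dist a m₁ = dist a m₂) :
    m₁ = m₂ := by
  have hb := collinear ht h₁ h₂ (le_of_eq heq)
  unfold Btw at hb
  have : dist m₁ m₂ = 0 := by linarith
  exact dist_eq_zero.mp this

lemma btw_trans_left {a b c e : T} (h₁ : Btw a b c) (h₂ : Btw a c e) : Btw a b e := by
  unfold Btw at *
  have t1 : dist b e ≤ dist b c + dist c e := dist_triangle b c e
  have t2 : dist a e ≤ dist a b + dist b e := dist_triangle a b e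
  linarith

lemma btw_trans_right {a b c e : T} (h₁ : Btw a b c) (h₂ : Btw a c e) : Btw b c e := by
  unfold Btw at *
  have t1 : dist b e ≤ dist b c + dist c e := dist_triangle b c e
  have t2 : dist a e ≤ dist a b + dist b e := dist_triangle a b e
  linarith

lemma median (ht : IsRTree T) (x y z : T) :
    ∃ m : T, dist x m = gp x y z ∧ dist y m = gp y x z ∧ dist z m = gp z x y ∧
      Btw x m y ∧ Btw x m z ∧ Btw y m z := by
  obtain ⟨f, hf0, hfd, hP⟩ := ht.1 x y
  have hs0 : 0 ≤ gp x y z := gp_nonneg x y z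
  have hsd : gp x y z ≤ dist x y := gp_le_left x y z
  have h0m : (0:ℝ) ∈ Set.Icc 0 (dist x y) := ⟨le_refl 0, dist_nonneg⟩
  have hsm : gp x y z ∈ Set.Icc 0 (dist x y) := ⟨hs0, hsd⟩
  have hdm : dist x y ∈ Set.Icc 0 (dist x y) := ⟨dist_nonneg, le_refl _⟩
  set m := f (gp x y z) with hm
  have hxm : dist x m = gp x y z := by
    have := hP 0 h0m (gp x y z) hsm
    rw [hf0] at this
    rw [this]
    rw [abs_of_nonpos (by linarith)]; ring
  have hym : dist y m = dist x y - gp x y z := by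
    have := hP (gp x y z) hsm (dist x y) hdm
    rw [hfd] at this
    rw [dist_comm y m, this, abs_of_nonpos (by linarith)]; ring
  have hym' : dist y m = gp y x z := by
    rw [hym]
    have c1 : dist y x = dist x y := dist_comm y x
    have c2 : dist y z = dist z y := dist_comm y z
    have c3 : dist x z = dist z x := dist_comm x z
    unfold gp; linarith
  -- third distance
  have hzm : dist z m = gp z x y := by
    have h0 : gp m x y = 0 := by
      have c1 : dist m x = dist x m := dist_comm m x
      have c2 : dist m y = dist y m := dist_comm m y
      unfold gp
      rw [c1, c2, hxm, hym]; ring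
    have h4 := hyp4 ht m x y z
    rw [h0] at h4
    rcases min_zero_cases (gp_nonneg m x z) (gp_nonneg m z y) h4 with hA | hB
    · have c1 : dist m x = dist x m := dist_comm m x
      have c2 : dist m z = dist z m := dist_comm m z
      have c3 : dist x z = dist z x := dist_comm x z
      have c4 : dist x y = dist y x := dist_comm x y
      have c5 : dist y z = dist z y := dist_comm y z
      have hxm' : dist x m = (dist x y + dist x z - dist y z)/2 := by
        rw [hxm]; unfold gp; ring
      unfold gp at hA ⊢
      linarith
    · have c1 : dist m y = dist y m := dist_comm m y
      have c2 : dist m z = dist z m := dist_comm m z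
      have c3 : dist y z = dist z y := dist_comm y z
      have c4 : dist x y = dist y x := dist_comm x y
      have c5 : dist x z = dist z x := dist_comm x z
      have hym2 : dist y m = (dist y x + dist y z - dist x z)/2 := by
        rw [hym']; unfold gp; ring
      unfold gp at hB ⊢
      linarith
  refine ⟨m, hxm, hym', hzm, ?_, ?_, ?_⟩
  · unfold Btw
    have c : dist m y = dist y m := dist_comm m y
    rw [hxm, c, hym']
    have c1 : dist y x = dist x y := dist_comm y x
    have c2 : dist y z = dist z y := dist_comm y z
    have c3 : dist x z = dist z x := dist_comm x z
    unfold gp; ring_nf; linarith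
  · unfold Btw
    have c : dist m z = dist z m := dist_comm m z
    rw [hxm, c, hzm]
    have c1 : dist z x = dist x z := dist_comm z x
    have c2 : dist z y = dist y z := dist_comm z y
    have c3 : dist x y = dist y x := dist_comm x y
    unfold gp; ring_nf; linarith
  · unfold Btw
    have c : dist m z = dist z m := dist_comm m z
    rw [hym', c, hzm]
    have c1 : dist z x = dist x z := dist_comm z x
    have c2 : dist z y = dist y z := dist_comm z y
    have c3 : dist y x = dist x y := dist_comm y x
    unfold gp; ring_nf; linarith


lemma transLen_nonneg (φ : T ≃ᵢ T) [Nonempty T] : 0 ≤ transLen φ :=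
  le_ciInf fun x => dist_nonneg

lemma transLen_le (φ : T ≃ᵢ T) (x : T) : transLen φ ≤ dist x (φ x) :=
  ciInf_le ⟨0, by rintro v ⟨x, rfl⟩; exact dist_nonneg⟩ x

lemma le_transLen [Nonempty T] {φ : T ≃ᵢ T} {a : ℝ} (h : ∀ x, a ≤ dist x (φ x)) :
    a ≤ transLen φ := le_ciInf h

lemma aligned_le (ht : IsRTree T) (φ : T ≃ᵢ T) {c : T}
    (hal : dist c (φ (φ c)) = 2 * dist c (φ c)) (y : T) :
    dist c (φ c) ≤ dist y (φ y) := by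
  have h1 : dist c (φ.symm c) = dist c (φ c) := by
    rw [← φ.dist_eq c (φ.symm c), φ.apply_symm_apply, dist_comm]
  have h2 : dist (φ.symm c) (φ c) = dist c (φ (φ c)) := by
    rw [← φ.dist_eq (φ.symm c) (φ c), φ.apply_symm_apply]
  have h0 : gp c (φ.symm c) (φ c) = 0 := by
    unfold gp; rw [h1, h2, hal]; ring
  have h4 := hyp4 ht c (φ.symm c) (φ c) y
  rw [h0] at h4
  rcases min_zero_cases (gp_nonneg c (φ.symm c) y) (gp_nonneg c y (φ c)) h4 with hA | hB
  · have e : dist (φ.symm c) y = dist c (φ c) + dist c y := by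
      have c1 : dist c (φ.symm c) = dist c (φ c) := h1
      unfold gp at hA; linarith
    have e2 : dist (φ.symm c) y = dist c (φ y) := by
      rw [← φ.dist_eq (φ.symm c) y, φ.apply_symm_apply]
    have tri : dist c (φ y) ≤ dist c y + dist y (φ y) := dist_triangle c y (φ y)
    linarith
  · have e : dist y (φ c) = dist c y + dist c (φ c) := by
      unfold gp at hB; linarith
    have tri : dist y (φ c) ≤ dist y (φ y) + dist (φ y) (φ c) := dist_triangle y (φ y) (φ c)
    have e2 : dist (φ y) (φ c) = dist y c := φ.dist_eq y c
    have c1 : dist y c = dist c y := dist_comm y c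
    linarith

lemma exists_aligned (ht : IsRTree T) (φ : T ≃ᵢ T) (x : T) :
    ∃ c : T, dist c (φ (φ c)) = 2 * dist c (φ c) ∧
      dist c (φ c) = max 0 (dist x (φ (φ x)) - dist x (φ x)) := by
  set d := dist x (φ x) with hd
  set k := gp (φ x) x (φ (φ x)) with hk
  have hd0 : 0 ≤ d := dist_nonneg
  have d12 : dist (φ x) (φ (φ x)) = d := φ.dist_eq x (φ x)
  have d02 : dist x (φ (φ x)) = 2*d - 2*k := by
    have c1 : dist (φ x) x = dist x (φ x) := dist_comm _ _
    unfold gp at hk; rw [c1] at hk; rw [d12] at hk; linarith [hk]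
  have hk0 : 0 ≤ k := gp_nonneg _ _ _
  have hkd : k ≤ d := by
    have := gp_le_left (φ x) x (φ (φ x))
    rw [dist_comm (φ x) x] at this; exact this.trans_eq rfl
  -- median of x, φx, φ²x
  obtain ⟨m, hm0, hm1, hm2, hbm01, hbm02, hbm12⟩ := median ht x (φ x) (φ (φ x))
  have hm0' : dist x m = d - k := by
    rw [hm0]; unfold gp; rw [d12, d02]; ring
  have hm1' : dist (φ x) m = k := by
    rw [hm1]
  have hm2' : dist (φ (φ x)) m = d - k := by
    rw [hm2]; unfold gp
    rw [dist_comm (φ (φ x)) x, dist_comm (φ (φ x)) (φ x), d12, d02]; ring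
  -- midpoint c of [x, φ x]
  obtain ⟨f, hf0, hfd, hP⟩ := ht.1 x (φ x)
  have h0m : (0:ℝ) ∈ Set.Icc 0 (dist x (φ x)) := ⟨le_refl 0, dist_nonneg⟩
  have hhm : d/2 ∈ Set.Icc 0 (dist x (φ x)) := ⟨by linarith, by rw [← hd]; linarith⟩
  have hdm : dist x (φ x) ∈ Set.Icc 0 (dist x (φ x)) := ⟨dist_nonneg, le_refl _⟩
  set c := f (d/2) with hc
  have hc0 : dist x c = d/2 := by
    have := hP 0 h0m (d/2) hhm
    rw [hf0] at this; rw [hc, this, abs_of_nonpos (by linarith)]; ring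
  have hc1 : dist c (φ x) = d/2 := by
    have := hP (d/2) hhm (dist x (φ x)) hdm
    rw [hfd] at this
    show dist (f (d/2)) (φ x) = d/2
    rw [this, ← hd, abs_of_nonpos (by linarith)]; ring
  have hbxc : Btw x c (φ x) := by unfold Btw; rw [hc0, hc1, ← hd]; ring
  have pc0 : dist (φ x) (φ c) = d/2 := by rw [φ.dist_eq]; exact hc0
  have pc1 : dist (φ c) (φ (φ x)) = d/2 := by rw [φ.dist_eq]; exact hc1
  have hbφ : Btw (φ x) (φ c) (φ (φ x)) := btw_map φ hbxc
  rcases le_or_gt k (d/2) with hcase | hcase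
  · -- k ≤ d/2 : translation-like case
    have hxcm : Btw x c m := collinear ht hbxc hbm01 (by rw [hc0, hm0']; linarith)
    have hdcm : dist c m = d/2 - k := by
      unfold Btw at hxcm; rw [hc0, hm0'] at hxcm; linarith
    have hcmX2 : Btw c m (φ (φ x)) := btw_trans_right hxcm hbm02
    have hcX2 : dist c (φ (φ x)) = 3*d/2 - 2*k := by
      unfold Btw at hcmX2
      rw [hdcm, dist_comm m (φ (φ x))] at hcmX2
      rw [hcmX2, hm2']; ring
    have hmφc : Btw (φ x) m (φ c) := by
      refine collinear ht ?_ hbφ (by rw [hm1', pc0]; linarith)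
      · unfold Btw at hbm12 ⊢; rw [hm1']; rw [hm1'] at hbm12; exact hbm12
    have hdmφc : dist m (φ c) = d/2 - k := by
      unfold Btw at hmφc; rw [hm1', pc0] at hmφc; linarith
    have hup : dist c (φ c) ≤ d - 2*k := by
      have := dist_triangle c m (φ c); linarith
    have hlo : d - 2*k ≤ dist c (φ c) := by
      have := dist_triangle c (φ c) (φ (φ x)); linarith
    have dcφc : dist c (φ c) = d - 2*k := le_antisymm hup hlo
    have hbcf2 : Btw c (φ c) (φ (φ x)) := by
      unfold Btw; rw [hcX2, dcφc, pc1]; ring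
    have h0 : gp (φ c) c (φ (φ x)) = 0 := by
      unfold Btw at hbcf2; unfold gp
      rw [dist_comm (φ c) c, dcφc, pc1, hcX2] at *; linarith
    have h4 := hyp4 ht (φ c) c (φ (φ x)) (φ (φ c))
    rw [h0] at h4
    have hmax : max 0 (dist x (φ (φ x)) - d) = d - 2*k := by
      rw [d02, max_eq_right (by linarith : (0:ℝ) ≤ 2*d - 2*k - d)]; ring
    rcases min_zero_cases (gp_nonneg _ _ _) (gp_nonneg _ _ _) h4 with hA | hB
    · refine ⟨c, ?_, by rw [dcφc, hmax]⟩
      have dφ2 : dist (φ c) (φ (φ c)) = d - 2*k := by rw [φ.dist_eq]; exact dcφc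
      unfold gp at hA
      rw [dist_comm (φ c) c, dcφc, dφ2] at hA
      rw [dcφc]; linarith
    · -- degenerate: k = d/2, c is fixed
      have dφ2 : dist (φ c) (φ (φ c)) = d - 2*k := by rw [φ.dist_eq]; exact dcφc
      have dφ2x : dist (φ (φ c)) (φ (φ x)) = d/2 := by
        rw [φ.dist_eq, φ.dist_eq, dist_comm]; exact hc0
      unfold gp at hB
      rw [dφ2, pc1, dφ2x] at hB
      have hkd2 : k = d/2 := by linarith
      have hfix : φ c = c := by
        have : dist c (φ c) = 0 := by rw [dcφc, hkd2]; ring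
        exact (dist_eq_zero.mp this).symm
      refine ⟨c, ?_, ?_⟩
      · rw [hfix, hfix, dist_self]; ring
      · rw [hfix, dist_self, hmax, hkd2]; ring
  · -- d/2 < k : elliptic case, c is fixed
    have hbxmc : Btw x m c := collinear ht hbm01 hbxc (by rw [hc0, hm0']; linarith)
    have hdmc : dist m c = k - d/2 := by
      unfold Btw at hbxmc; rw [hc0, hm0'] at hbxmc; linarith
    have hbmcX1 : Btw m c (φ x) := btw_trans_right hbxmc hbxc
    have hbφ1 : Btw (φ x) (φ m) (φ c) := btw_map φ hbxmc
    have hbφ2 : Btw (φ m) (φ c) (φ (φ x)) := btw_map φ hbmcX1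
    have hbφm12 : Btw (φ x) (φ m) (φ (φ x)) := btw_map φ hbm01
    have dφm : dist (φ x) (φ m) = d - k := by rw [φ.dist_eq]; exact hm0'
    have dφmφc : dist (φ m) (φ c) = k - d/2 := by rw [φ.dist_eq]; exact hdmc
    have hbm12' : Btw (φ x) m (φ (φ x)) := by
      unfold Btw at hbm12 ⊢; rw [hm1'] at hbm12 ⊢; exact hbm12
    have hcol : Btw (φ x) (φ m) m := collinear ht hbφm12 hbm12' (by rw [dφm, hm1']; linarith)
    have dφmm : dist (φ m) m = 2*k - d := by
      unfold Btw at hcol; rw [dφm, hm1'] at hcol; linarith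
    have hφmm2 : Btw (φ m) m (φ (φ x)) := btw_trans_right hcol hbm12'
    have hφcm : Btw (φ m) (φ c) m := by
      refine collinear ht hbφ2 hφmm2 (by rw [dφmφc, dφmm]; linarith)
    have dφcm : dist (φ c) m = k - d/2 := by
      unfold Btw at hφcm; rw [dφmφc, dφmm] at hφcm; linarith
    have hX1cm : Btw (φ x) c m := btw_symm hbmcX1
    have hX1φcm : Btw (φ x) (φ c) m := by
      unfold Btw; rw [hm1', pc0, dφcm]; ring
    have hfix : φ c = c := by
      refine (unique_between ht hX1cm hX1φcm ?_).symm
      rw [pc0]; rw [dist_comm]; exact hc1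
    refine ⟨c, ?_, ?_⟩
    · rw [hfix, hfix, dist_self]; ring
    · rw [hfix, dist_self, d02, max_eq_left (by linarith : 2*d - 2*k - d ≤ (0:ℝ))]

lemma transLen_eq (ht : IsRTree T) [Nonempty T] (φ : T ≃ᵢ T) (x : T) :
    transLen φ = max 0 (dist x (φ (φ x)) - dist x (φ x)) := by
  obtain ⟨c, hal, hval⟩ := exists_aligned ht φ x
  refine le_antisymm ((transLen_le φ c).trans_eq hval) ?_
  rw [← hval]
  exact le_transLen (aligned_le ht φ hal)

lemma axis_nonempty (ht : IsRTree T) [Nonempty T] (φ : T ≃ᵢ T) :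
    ∃ c, c ∈ axisSet φ := by
  obtain ⟨x⟩ := ‹Nonempty T›
  obtain ⟨c, hal, hval⟩ := exists_aligned ht φ x
  exact ⟨c, by rw [axisSet, Set.mem_setOf_eq, hval, transLen_eq ht φ x]⟩

lemma transLen_lower (ht : IsRTree T) [Nonempty T] (φ : T ≃ᵢ T) (x : T) :
    dist x (φ (φ x)) - dist x (φ x) ≤ transLen φ := by
  rw [transLen_eq ht φ x]; exact le_max_right _ _

lemma disp_le (ht : IsRTree T) (φ : T ≃ᵢ T) {u z w : T} (h : Btw u z w) :
    dist z (φ z) ≤ max (dist u (φ u)) (dist w (φ w)) := by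
  have h4 := ht.2 u w z (φ z)
  unfold Btw at h
  rcases le_total (dist u z + dist w (φ z)) (dist u (φ z) + dist w z) with hc | hc
  · rw [max_eq_right hc] at h4
    have t : dist u (φ z) ≤ dist u (φ u) + dist (φ u) (φ z) := dist_triangle _ _ _
    have e : dist (φ u) (φ z) = dist u z := φ.dist_eq u z
    refine le_trans ?_ (le_max_left (dist u (φ u)) (dist w (φ w)))
    have c1 : dist w z = dist z w := dist_comm w z
    linarith
  · rw [max_eq_left hc] at h4
    have t : dist w (φ z) ≤ dist w (φ w) + dist (φ w) (φ z) := dist_triangle _ _ _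
    have e : dist (φ w) (φ z) = dist w z := φ.dist_eq w z
    refine le_trans ?_ (le_max_right (dist u (φ u)) (dist w (φ w)))
    have c1 : dist w z = dist z w := dist_comm w z
    linarith

lemma axis_convex (ht : IsRTree T) {φ : T ≃ᵢ T} {a b z : T}
    (ha : a ∈ axisSet φ) (hb : b ∈ axisSet φ) (hbtw : Btw a z b) : z ∈ axisSet φ := by
  have h1 := disp_le ht φ hbtw
  rw [axisSet, Set.mem_setOf_eq] at ha hb ⊢
  rw [ha, hb, max_self] at h1
  exact le_antisymm h1 (transLen_le φ z)

lemma axis_closed (φ : T ≃ᵢ T) : IsClosed (axisSet φ) := by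
  have : axisSet φ = (fun x => dist x (φ x)) ⁻¹' {transLen φ} := rfl
  rw [this]
  exact IsClosed.preimage (Continuous.dist continuous_id φ.continuous) isClosed_singleton

lemma axis_map {φ : T ≃ᵢ T} {z : T} (hz : z ∈ axisSet φ) : φ z ∈ axisSet φ := by
  rw [axisSet, Set.mem_setOf_eq] at hz ⊢
  rw [φ.dist_eq]; exact hz

lemma axis_symm_map {φ : T ≃ᵢ T} {z : T} (hz : z ∈ axisSet φ) : φ.symm z ∈ axisSet φ := by
  rw [axisSet, Set.mem_setOf_eq] at hz ⊢
  rw [φ.apply_symm_apply, ← φ.dist_eq (φ.symm z) z, φ.apply_symm_apply]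
  exact hz


lemma bridge (ht : IsRTree T) [Nonempty T] (φ₁ φ₂ : T ≃ᵢ T)
    (hdisj : ∀ x, x ∈ axisSet φ₁ → x ∈ axisSet φ₂ → False) :
    ∃ b₁ b₂ : T, b₁ ∈ axisSet φ₁ ∧ b₂ ∈ axisSet φ₂ ∧ 0 < dist b₁ b₂ ∧
      (∀ z ∈ axisSet φ₁, Btw z b₁ b₂) ∧ (∀ w ∈ axisSet φ₂, Btw w b₂ b₁) := by
  obtain ⟨q, hq⟩ := axis_nonempty ht φ₁
  obtain ⟨p, hp⟩ := axis_nonempty ht φ₂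
  obtain ⟨f, hf0, hfL, hP⟩ := ht.1 q p
  set L := dist q p with hL
  have hL0 : 0 ≤ L := dist_nonneg
  have hfd : ∀ s ∈ Set.Icc (0:ℝ) L, ∀ t ∈ Set.Icc (0:ℝ) L, dist (f s) (f t) = |s - t| := hP
  have hcont : ContinuousOn f (Set.Icc 0 L) := by
    have : LipschitzOnWith 1 f (Set.Icc 0 L) := by
      refine LipschitzOnWith.of_dist_le_mul fun s hs t htt => ?_
      rw [hfd s hs t htt, Real.dist_eq, NNReal.coe_one, one_mul]
    exact this.continuousOn
  -- the parameter sets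
  set S₁ := Set.Icc (0:ℝ) L ∩ f ⁻¹' (axisSet φ₁) with hS₁
  set S₂ := Set.Icc (0:ℝ) L ∩ f ⁻¹' (axisSet φ₂) with hS₂
  have hS₁c : IsClosed S₁ :=
    hcont.preimage_isClosed_of_isClosed isClosed_Icc (axis_closed φ₁)
  have hS₂c : IsClosed S₂ :=
    hcont.preimage_isClosed_of_isClosed isClosed_Icc (axis_closed φ₂)
  have h0S₁ : (0:ℝ) ∈ S₁ := ⟨⟨le_refl 0, hL0⟩, by simp only [Set.mem_preimage, hf0]; exact hq⟩
  have hLS₂ : L ∈ S₂ := ⟨⟨hL0, le_refl L⟩, by simp only [Set.mem_preimage, hfL]; exact hp⟩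
  have hS₁bdd : BddAbove S₁ := ⟨L, fun t htm => htm.1.2⟩
  have hS₂bdd : BddBelow S₂ := ⟨0, fun t htm => htm.1.1⟩
  set t₁ := sSup S₁ with ht₁def
  set t₂ := sInf S₂ with ht₂def
  have ht₁ : t₁ ∈ S₁ := hS₁c.csSup_mem ⟨0, h0S₁⟩ hS₁bdd
  have ht₂ : t₂ ∈ S₂ := hS₂c.csInf_mem ⟨L, hLS₂⟩ hS₂bdd
  set b₁ := f t₁ with hb₁def
  set b₂ := f t₂ with hb₂def
  have hb₁ : b₁ ∈ axisSet φ₁ := ht₁.2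
  have hb₂ : b₂ ∈ axisSet φ₂ := ht₂.2
  have ht₁I : t₁ ∈ Set.Icc (0:ℝ) L := ht₁.1
  have ht₂I : t₂ ∈ Set.Icc (0:ℝ) L := ht₂.1
  -- betweenness along f
  have hbtwf : ∀ r s t : ℝ, r ∈ Set.Icc (0:ℝ) L → s ∈ Set.Icc (0:ℝ) L →
      t ∈ Set.Icc (0:ℝ) L → r ≤ s → s ≤ t → Btw (f r) (f s) (f t) := by
    intro r s t hr hs htt hrs hst
    unfold Btw
    rw [hfd r hr t htt, hfd r hr s hs, hfd s hs t htt,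
      abs_of_nonpos (by linarith), abs_of_nonpos (by linarith),
      abs_of_nonpos (by linarith)]
    ring
  have horder : t₁ < t₂ := by
    rcases lt_or_ge t₁ t₂ with h | h
    · exact h
    · exfalso
      have hbtwq : Btw q (f t₂) b₁ := by
        have := hbtwf 0 t₂ t₁ ⟨le_refl 0, hL0⟩ ht₂I ht₁I ht₂I.1 h
        rwa [hf0] at this
      exact hdisj (f t₂) (axis_convex ht hq hb₁ hbtwq) ht₂.2
  have hΔ : dist b₁ b₂ = t₂ - t₁ := by
    rw [hb₁def, hb₂def, hfd t₁ ht₁I t₂ ht₂I, abs_of_nonpos (by linarith)]; ring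
  refine ⟨b₁, b₂, hb₁, hb₂, by rw [hΔ]; linarith, ?_, ?_⟩
  · -- G1
    intro z hz
    obtain ⟨m, hm0, hm1, hm2, hb01, hb02, hb12⟩ := median ht b₁ z b₂
    have hm₁ : m ∈ axisSet φ₁ := axis_convex ht hb₁ hz hb01
    have he0 : 0 ≤ gp b₁ z b₂ := gp_nonneg _ _ _
    have heΔ : gp b₁ z b₂ ≤ dist b₁ b₂ := gp_le_right _ _ _
    set e := gp b₁ z b₂ with hedef
    have htI : t₁ + e ∈ Set.Icc (0:ℝ) L := by
      constructor
      · linarith [ht₁I.1]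
      · rw [hΔ] at heΔ; linarith [ht₂I.2]
    have hfb : Btw b₁ (f (t₁ + e)) b₂ := by
      have := hbtwf t₁ (t₁ + e) t₂ ht₁I htI ht₂I (by linarith) (by rw [hΔ] at heΔ; linarith)
      exact this
    have hfb' : dist b₁ (f (t₁ + e)) = e := by
      rw [hb₁def, hfd t₁ ht₁I (t₁ + e) htI, abs_of_nonpos (by linarith)]; ring
    have hmeq : m = f (t₁ + e) := unique_between ht hb02 hfb (by rw [hm0, hfb'])
    have hin : t₁ + e ∈ S₁ := ⟨htI, by simp only [Set.mem_preimage, ← hmeq]; exact hm₁⟩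
    have : t₁ + e ≤ t₁ := le_csSup hS₁bdd hin
    have he : e = 0 := le_antisymm (by linarith) he0
    have hmb : m = b₁ := by
      have : dist b₁ m = 0 := by rw [hm0, he]
      exact (dist_eq_zero.mp this).symm
    have := hb12
    rw [hmb] at this
    exact this
  · -- G2
    intro w hw
    obtain ⟨m, hm0, hm1, hm2, hb01, hb02, hb12⟩ := median ht b₂ w b₁
    have hm₂ : m ∈ axisSet φ₂ := axis_convex ht hb₂ hw hb01
    have he0 : 0 ≤ gp b₂ w b₁ := gp_nonneg _ _ _
    have heΔ : gp b₂ w b₁ ≤ dist b₂ b₁ := gp_le_right _ _ _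
    rw [dist_comm b₂ b₁, hΔ] at heΔ
    set e := gp b₂ w b₁ with hedef
    have htI : t₂ - e ∈ Set.Icc (0:ℝ) L := by
      constructor
      · linarith [ht₁I.1]
      · linarith [ht₂I.2]
    have hfb : Btw b₁ (f (t₂ - e)) b₂ := by
      exact hbtwf t₁ (t₂ - e) t₂ ht₁I htI ht₂I (by linarith) (by linarith)
    have hfb' : dist b₂ (f (t₂ - e)) = e := by
      rw [hb₂def, hfd t₂ ht₂I (t₂ - e) htI, abs_of_nonneg (by linarith)]; ring
    have hmeq : m = f (t₂ - e) := unique_between ht hb02 (btw_symm hfb) (by rw [hm0, hfb'])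
    have hin : t₂ - e ∈ S₂ := ⟨htI, by simp only [Set.mem_preimage, ← hmeq]; exact hm₂⟩
    have : t₂ ≤ t₂ - e := csInf_le hS₂bdd hin
    have he : e = 0 := le_antisymm (by linarith) he0
    have hmb : m = b₂ := by
      have : dist b₂ m = 0 := by rw [hm0, he]
      exact (dist_eq_zero.mp this).symm
    have := hb12
    rw [hmb] at this
    exact this

lemma zlem (ht : IsRTree T) {A₁ A₂ : Set T}
    (conv₁ : ∀ a b z : T, a ∈ A₁ → b ∈ A₁ → Btw a z b → z ∈ A₁)
    (hdisj : ∀ x, x ∈ A₁ → x ∈ A₂ → False)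
    {b₁ b₂ a y₁ y₂ : T} (hb₁ : b₁ ∈ A₁) (hb₂ : b₂ ∈ A₂)
    (hG1 : ∀ z ∈ A₁, Btw z b₁ b₂)
    (ha : a ∈ A₁) (hapos : 0 < dist b₁ a) (hay : Btw b₁ a y₁) (hy₂ : Btw y₂ b₂ b₁) :
    Btw y₁ b₁ y₂ := by
  obtain ⟨m, hm0, hm1, hm2, hbm1, hbm2, hb12⟩ := median ht b₁ y₁ y₂
  set e := gp b₁ y₁ y₂ with hedef
  have hb₂y₂ : Btw b₁ b₂ y₂ := btw_symm hy₂
  have hcontra_a : Btw b₁ a b₂ → False := by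
    intro hab₂
    have hg := hG1 a ha
    unfold Btw at hab₂ hg
    rw [dist_comm a b₁] at hg
    linarith
  have hdone : dist b₁ m = 0 → Btw y₁ b₁ y₂ := by
    intro h0
    have hmb : m = b₁ := (dist_eq_zero.mp h0).symm
    rw [hmb] at hb12; exact hb12
  rcases le_total e (dist b₁ b₂) with h1 | h1
  · have hmb₂ : Btw b₁ m b₂ := collinear ht hbm2 hb₂y₂ (by rw [hm0]; exact h1)
    rcases le_total e (dist b₁ a) with h2 | h2
    · have hma : Btw b₁ m a := collinear ht hbm1 hay (by rw [hm0]; exact h2)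
      have hm₁ : m ∈ A₁ := conv₁ b₁ a m hb₁ ha hma
      have hg := hG1 m hm₁
      apply hdone
      unfold Btw at hg hmb₂
      rw [dist_comm m b₁] at hg
      linarith
    · have ham : Btw b₁ a m := collinear ht hay hbm1 (by rw [hm0]; exact h2)
      exact absurd (btw_trans_left ham hmb₂) (fun hh => hcontra_a hh)
  · have hb₂m : Btw b₁ b₂ m := collinear ht hb₂y₂ hbm2 (by rw [hm0]; exact h1)
    rcases le_total e (dist b₁ a) with h2 | h2
    · have hma : Btw b₁ m a := collinear ht hbm1 hay (by rw [hm0]; exact h2)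
      have hm₁ : m ∈ A₁ := conv₁ b₁ a m hb₁ ha hma
      have : b₂ ∈ A₁ := conv₁ b₁ m b₂ hb₁ hm₁ hb₂m
      exact absurd (hdisj b₂ this hb₂) id
    · have ham : Btw b₁ a m := collinear ht hay hbm1 (by rw [hm0]; exact h2)
      rcases le_total (dist b₁ a) (dist b₁ b₂) with h3 | h3
      · exact absurd (collinear ht ham hb₂m h3) (fun hh => hcontra_a hh)
      · have hb₂a : Btw b₁ b₂ a := collinear ht hb₂m ham h3
        have : b₂ ∈ A₁ := conv₁ b₁ a b₂ hb₁ ha hb₂a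
        exact absurd (hdisj b₂ this hb₂) id

lemma rot (ht : IsRTree T) (g : T ≃ᵢ T) {b₁ b₂ y : T} (hfix : g b₁ = b₁)
    (hG1 : ∀ z, g z = z → Btw z b₁ b₂) (hy : Btw b₁ b₂ y) :
    Btw b₂ b₁ (g y) := by
  obtain ⟨m, hm0, hm1, hm2, hbm1, hbm2, hb12⟩ := median ht b₁ b₂ (g y)
  set e := gp b₁ b₂ (g y) with hedef
  have heΔ : e ≤ dist b₁ b₂ := gp_le_left _ _ _
  have he0 : 0 ≤ e := gp_nonneg _ _ _
  -- m is between b₁ and y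
  have hgpmb : gp b₁ m b₂ = e := by
    unfold Btw at hbm1
    unfold gp
    linarith [hbm1, hm0]
  have hgpby : gp b₁ b₂ y = dist b₁ b₂ := by
    unfold Btw at hy; unfold gp; linarith
  have h4 := hyp4 ht b₁ m y b₂
  rw [hgpmb, hgpby, min_eq_left heΔ] at h4
  have h4' : gp b₁ m y ≤ e := by
    have := gp_le_left b₁ m y
    rw [hm0] at this; exact this
  have hgpmy : gp b₁ m y = e := le_antisymm h4' h4
  have hmy : Btw b₁ m y := by
    unfold Btw
    unfold gp at hgpmy
    linarith [hgpmy, hm0]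
  -- g fixes m
  have himg : Btw b₁ (g m) (g y) := by
    have := btw_map g hmy
    rwa [hfix] at this
  have hdgm : dist b₁ (g m) = e := by
    have : dist b₁ (g m) = dist b₁ m := by
      conv_lhs => rw [← hfix]
      rw [g.dist_eq]
    rw [this, hm0]
  have hbm2' : Btw b₁ m (g y) := hbm2
  have hgm : m = g m := by
    refine unique_between ht hbm2' himg ?_
    rw [hdgm, hm0]
  have hg := hG1 m hgm.symm
  have he : e = 0 := by
    unfold Btw at hg hbm1
    have c1 : dist m b₁ = dist b₁ m := dist_comm m b₁
    linarith [hg, hbm1, hm0]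
  unfold Btw
  have hh : e = (dist b₁ b₂ + dist b₁ (g y) - dist b₂ (g y)) / 2 := by
    rw [hedef]; unfold gp; ring
  rw [dist_comm b₂ b₁]
  linarith [hh, he]


lemma dist_symm_left (φ : T ≃ᵢ T) (x y : T) : dist (φ.symm x) y = dist x (φ y) := by
  rw [← φ.dist_eq (φ.symm x) y, φ.apply_symm_apply]

lemma dist_symm_right (φ : T ≃ᵢ T) (x y : T) : dist x (φ.symm y) = dist (φ x) y := by
  rw [← φ.dist_eq x (φ.symm y), φ.apply_symm_apply]

lemma fix_iff_axis [Nonempty T] {g : T ≃ᵢ T} (hg : ∃ p : T, g p = p) :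
    ∀ x : T, x ∈ axisSet g ↔ g x = x := by
  obtain ⟨p, hp⟩ := hg
  have h0 : transLen g = 0 := by
    refine le_antisymm ?_ (le_transLen fun x => dist_nonneg)
    have := transLen_le g p
    rw [hp, dist_self] at this; exact this
  intro x
  rw [axisSet, Set.mem_setOf_eq, h0, dist_eq_zero]
  exact ⟨fun h => h.symm, fun h => h.symm⟩

lemma easy_ineq [Nonempty T] {g h : T ≃ᵢ T} {p : T} (hp : g p = p) (hph : p ∈ axisSet h) :
    transLen (h.trans g) ≤ transLen h := by
  have h1 := transLen_le (h.trans g) p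
  simp only [IsometryEquiv.trans_apply] at h1
  have h2 : dist p (g (h p)) = dist p (h p) := by
    have h2' : dist (g p) (g (h p)) = dist p (h p) := g.dist_eq p (h p)
    rw [hp] at h2'; exact h2'
  have h3 : dist p (h p) = transLen h := hph
  rw [h2, h3] at h1; exact h1

lemma n2 {h h' : T ≃ᵢ T} {p : T} (hp : p ∈ axisSet h) (hp' : p ∈ axisSet h') :
    transLen (h'.trans h) ≤ transLen h + transLen h' := by
  have h1 := transLen_le (h'.trans h) p
  simp only [IsometryEquiv.trans_apply] at h1
  have tri : dist p (h (h' p)) ≤ dist p (h p) + dist (h p) (h (h' p)) := dist_triangle _ _ _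
  have e : dist (h p) (h (h' p)) = dist p (h' p) := h.dist_eq _ _
  have hp1 : dist p (h p) = transLen h := hp
  have hp2 : dist p (h' p) = transLen h' := hp'
  linarith

lemma n1 (ht : IsRTree T) [Nonempty T] (g h : T ≃ᵢ T) (hgfix : ∃ p : T, g p = p)
    (hh : 0 < transLen h) (hle : transLen (h.trans g) ≤ transLen h) :
    ∃ x : T, g x = x ∧ x ∈ axisSet h := by
  by_contra hcon
  push_neg at hcon
  have hfixiff := fix_iff_axis hgfix
  have hdisj : ∀ x, x ∈ axisSet g → x ∈ axisSet h → False := fun x hx hx' =>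
    hcon x ((hfixiff x).1 hx) hx'
  obtain ⟨b₁, b₂, hb₁, hb₂, hΔpos, hG1, hG2⟩ := bridge ht g h hdisj
  have hfixb₁ : g b₁ = b₁ := (hfixiff b₁).1 hb₁
  have hG1' : ∀ z, g z = z → Btw z b₁ b₂ := fun z hz => hG1 z ((hfixiff z).2 hz)
  have F1 : dist b₂ (h b₂) = transLen h := hb₂
  have hhb₂ : h b₂ ∈ axisSet h := axis_map hb₂
  have e1 : dist (h b₂) b₁ = transLen h + dist b₁ b₂ := by
    have hg2 := hG2 (h b₂) hhb₂
    unfold Btw at hg2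
    have c1 : dist (h b₂) b₂ = dist b₂ (h b₂) := dist_comm _ _
    have c2 : dist b₂ b₁ = dist b₁ b₂ := dist_comm _ _
    linarith [hg2]
  have r0 : Btw b₂ b₁ (g b₂) := rot ht g hfixb₁ hG1' (btw_triv_right b₁ b₂)
  have r1 : Btw b₂ b₁ (g (h b₂)) := rot ht g hfixb₁ hG1' (btw_symm (hG2 (h b₂) hhb₂))
  have hb₁g : ∀ u : T, dist b₁ (g u) = dist b₁ u := by
    intro u
    conv_lhs => rw [← hfixb₁]
    rw [g.dist_eq]
  have dgb₂ : dist b₂ (g b₂) = 2 * dist b₁ b₂ := by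
    unfold Btw at r0
    have c2 : dist b₂ b₁ = dist b₁ b₂ := dist_comm _ _
    linarith [r0, hb₁g b₂]
  have dψ : dist b₂ (g (h b₂)) = transLen h + 2 * dist b₁ b₂ := by
    unfold Btw at r1
    have c2 : dist b₂ b₁ = dist b₁ b₂ := dist_comm _ _
    have := hb₁g (h b₂)
    have c3 : dist b₁ (h b₂) = dist (h b₂) b₁ := dist_comm _ _
    linarith [r1]
  -- Z lemma at b₂ on the axis of h
  have hdisj' : ∀ x, x ∈ axisSet h → x ∈ axisSet g → False := fun x hx hx' => hdisj x hx' hx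
  have hapos : (0:ℝ) < dist b₂ (h.symm b₂) := by
    rw [dist_symm_right, dist_comm]
    rw [F1]; exact hh
  have hay : Btw b₂ (h.symm b₂) (h.symm (g.symm b₂)) := by
    unfold Btw
    have A1 : dist b₂ (h.symm (g.symm b₂)) = transLen h + 2 * dist b₁ b₂ := by
      rw [dist_symm_right h, dist_symm_right g, dist_comm]
      exact dψ
    have A2 : dist b₂ (h.symm b₂) = transLen h := by
      rw [dist_symm_right, dist_comm]; exact F1
    have A3 : dist (h.symm b₂) (h.symm (g.symm b₂)) = 2 * dist b₁ b₂ := by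
      rw [(h.symm).dist_eq, dist_symm_right g, dist_comm]
      exact dgb₂
    linarith
  have hy₂ : Btw (g (h b₂)) b₁ b₂ := by
    unfold Btw
    have B1 : dist (g (h b₂)) b₂ = transLen h + 2 * dist b₁ b₂ := by
      rw [dist_comm]; exact dψ
    have B2 : dist (g (h b₂)) b₁ = transLen h + dist b₁ b₂ := by
      rw [dist_comm, hb₁g (h b₂), dist_comm b₁ (h b₂)]
      exact e1
    linarith
  have hZ := zlem ht (fun a b z ha hb hw => axis_convex ht ha hb hw) hdisj'
    hb₂ hb₁ hG2 (axis_symm_map hb₂) hapos hay hy₂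
  -- final contradiction
  have hub : dist (h.symm (g.symm b₂)) b₂ = transLen h + 2 * dist b₁ b₂ := by
    rw [dist_symm_left h, dist_symm_left g]
    exact dψ
  have dtot : dist (h.symm (g.symm b₂)) (g (h b₂)) = 2 * (transLen h + 2 * dist b₁ b₂) := by
    unfold Btw at hZ
    linarith [hZ, hub, dψ]
  have hψu : (h.trans g) (h.symm (g.symm b₂)) = b₂ := by
    simp only [IsometryEquiv.trans_apply, IsometryEquiv.apply_symm_apply]
  have e2 : dist (h.symm (g.symm b₂)) ((h.trans g) b₂) =
      dist b₂ ((h.trans g) ((h.trans g) b₂)) := by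
    have := ((h.trans g).dist_eq (h.symm (g.symm b₂)) ((h.trans g) b₂)).symm
    rw [hψu] at this; exact this
  have lower := transLen_lower ht (h.trans g) b₂
  simp only [IsometryEquiv.trans_apply] at e2 lower
  linarith [lower, e2, dtot, dψ, hΔpos, hle]

lemma n4 (ht : IsRTree T) [Nonempty T] (h h' : T ≃ᵢ T)
    (hh : 0 < transLen h) (hh' : 0 < transLen h')
    (hdisj : ∀ x, x ∈ axisSet h → x ∈ axisSet h' → False) :
    transLen h + transLen h' < transLen (h'.trans h) := by
  obtain ⟨b₁, b₂, hb₁, hb₂, hΔpos, hG1, hG2⟩ := bridge ht h h' hdisj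
  have F1 : dist b₁ (h b₁) = transLen h := hb₁
  have F2 : dist b₂ (h' b₂) = transLen h' := hb₂
  have hdisj' : ∀ x, x ∈ axisSet h' → x ∈ axisSet h → False := fun x hx hx' => hdisj x hx' hx
  have conv : ∀ a b z : T, a ∈ axisSet h → b ∈ axisSet h → Btw a z b → z ∈ axisSet h :=
    fun a b z ha hb hw => axis_convex ht ha hb hw
  have conv' : ∀ a b z : T, a ∈ axisSet h' → b ∈ axisSet h' → Btw a z b → z ∈ axisSet h' :=
    fun a b z ha hb hw => axis_convex ht ha hb hw
  have ea : dist (h b₁) b₂ = transLen h + dist b₁ b₂ := by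
    have hg := hG1 (h b₁) (axis_map hb₁)
    unfold Btw at hg
    have c1 : dist (h b₁) b₁ = dist b₁ (h b₁) := dist_comm _ _
    linarith [hg]
  have ec : dist (h' b₂) b₁ = transLen h' + dist b₁ b₂ := by
    have hg := hG2 (h' b₂) (axis_map hb₂)
    unfold Btw at hg
    have c1 : dist (h' b₂) b₂ = dist b₂ (h' b₂) := dist_comm _ _
    have c2 : dist b₂ b₁ = dist b₁ b₂ := dist_comm _ _
    linarith [hg]
  have hapos1 : (0:ℝ) < dist b₁ (h.symm b₁) := by
    rw [dist_symm_right, dist_comm, F1]; exact hh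
  have hay1 : Btw b₁ (h.symm b₁) (h.symm b₂) := by
    unfold Btw
    have A1 : dist b₁ (h.symm b₂) = transLen h + dist b₁ b₂ := by
      rw [dist_symm_right h]; exact ea
    have A2 : dist b₁ (h.symm b₁) = transLen h := by
      rw [dist_symm_right, dist_comm]; exact F1
    have A3 : dist (h.symm b₁) (h.symm b₂) = dist b₁ b₂ := (h.symm).dist_eq b₁ b₂
    linarith
  have hZ1 : Btw (h.symm b₂) b₁ (h' b₂) :=
    zlem ht conv hdisj hb₁ hb₂ hG1 (axis_symm_map hb₁) hapos1 hay1
      (hG2 (h' b₂) (axis_map hb₂))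
  have d1 : dist (h.symm b₂) (h' b₂) = transLen h + transLen h' + 2 * dist b₁ b₂ := by
    unfold Btw at hZ1
    have A1 : dist (h.symm b₂) b₁ = transLen h + dist b₁ b₂ := by
      rw [dist_symm_left h, dist_comm]; exact ea
    have A2 : dist b₁ (h' b₂) = transLen h' + dist b₁ b₂ := by
      rw [dist_comm]; exact ec
    linarith [hZ1]
  have hZ2 : Btw (h.symm b₂) b₁ b₂ :=
    zlem ht conv hdisj hb₁ hb₂ hG1 (axis_symm_map hb₁) hapos1 hay1 (btw_triv_left b₂ b₁)
  have d2 : dist (h.symm b₂) b₂ = transLen h + 2 * dist b₁ b₂ := by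
    unfold Btw at hZ2
    have A1 : dist (h.symm b₂) b₁ = transLen h + dist b₁ b₂ := by
      rw [dist_symm_left h, dist_comm]; exact ea
    linarith [hZ2]
  have hZ3 : Btw (h.symm b₁) b₁ (h' b₂) :=
    zlem ht conv hdisj hb₁ hb₂ hG1 (axis_symm_map hb₁) hapos1
      (btw_triv_right b₁ (h.symm b₁)) (hG2 (h' b₂) (axis_map hb₂))
  have d3 : dist (h.symm b₁) (h' b₂) = transLen h + transLen h' + dist b₁ b₂ := by
    unfold Btw at hZ3
    have A1 : dist (h.symm b₁) b₁ = transLen h := by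
      rw [dist_symm_left h]; exact F1
    have A2 : dist b₁ (h' b₂) = transLen h' + dist b₁ b₂ := by
      rw [dist_comm]; exact ec
    linarith [hZ3]
  -- mirrored Z at b₂
  have hapos2 : (0:ℝ) < dist b₂ (h'.symm b₂) := by
    rw [dist_symm_right, dist_comm, F2]; exact hh'
  have hay2 : Btw b₂ (h'.symm b₂) (h'.symm (h.symm b₂)) := by
    unfold Btw
    have A1 : dist b₂ (h'.symm (h.symm b₂)) = transLen h + transLen h' + 2 * dist b₁ b₂ := by
      rw [dist_symm_right h', dist_comm]; exact d1
    have A2 : dist b₂ (h'.symm b₂) = transLen h' := by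
      rw [dist_symm_right, dist_comm]; exact F2
    have A3 : dist (h'.symm b₂) (h'.symm (h.symm b₂)) = transLen h + 2 * dist b₁ b₂ := by
      rw [(h'.symm).dist_eq, dist_comm]; exact d2
    linarith
  have hy₂4 : Btw (h (h' b₂)) b₁ b₂ := by
    unfold Btw
    have B1 : dist (h (h' b₂)) b₂ = transLen h + transLen h' + 2 * dist b₁ b₂ := by
      rw [← dist_symm_right h (h' b₂) b₂, dist_comm]; exact d1
    have B2 : dist (h (h' b₂)) b₁ = transLen h + transLen h' + dist b₁ b₂ := by
      rw [← dist_symm_right h (h' b₂) b₁, dist_comm]; exact d3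
    linarith
  have hZ4 : Btw (h'.symm (h.symm b₂)) b₂ (h (h' b₂)) :=
    zlem ht conv' hdisj' hb₂ hb₁ hG2 (axis_symm_map hb₂) hapos2 hay2 hy₂4
  -- final computation
  have hub : dist (h'.symm (h.symm b₂)) b₂ = transLen h + transLen h' + 2 * dist b₁ b₂ := by
    rw [dist_symm_left h']; exact d1
  have hb₂ψ : dist b₂ (h (h' b₂)) = transLen h + transLen h' + 2 * dist b₁ b₂ := by
    rw [dist_comm, ← dist_symm_right h (h' b₂) b₂, dist_comm]; exact d1
  have dtot : dist (h'.symm (h.symm b₂)) (h (h' b₂)) =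
      2 * (transLen h + transLen h' + 2 * dist b₁ b₂) := by
    unfold Btw at hZ4
    linarith [hZ4, hub, hb₂ψ]
  have hψu : (h'.trans h) (h'.symm (h.symm b₂)) = b₂ := by
    simp only [IsometryEquiv.trans_apply, IsometryEquiv.apply_symm_apply]
  have e2 : dist (h'.symm (h.symm b₂)) ((h'.trans h) b₂) =
      dist b₂ ((h'.trans h) ((h'.trans h) b₂)) := by
    have := ((h'.trans h).dist_eq (h'.symm (h.symm b₂)) ((h'.trans h) b₂)).symm
    rw [hψu] at this; exact this
  have lower := transLen_lower ht (h'.trans h) b₂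
  simp only [IsometryEquiv.trans_apply] at e2 lower
  linarith [lower, e2, dtot, hb₂ψ, hΔpos]

end RTreeAux


/-- Let T be an ℝ-tree and g an isometry of T with a fixed point. If there exist
two hyperbolic isometries h and h′ of T such that ‖gh‖ ≤ ‖h‖, ‖gh′‖ ≤ ‖h′‖, and
‖hh′‖ > ‖h‖ + ‖h′‖, then g fixes an arc (a nondegenerate segment) of T. Conversely, if g fixes
an arc of T and there exist hyperbolic isometries h, h′ whose axes meet the fixed point set of g
but are disjoint from each other, then these three translation-length inequalities hold. -/
theorem stmt6 {T : Type*} [MetricSpace T] [Nonempty T] (htree : IsRTree T)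
    (g : T ≃ᵢ T) (hgfix : ∃ x : T, g x = x) :
    ((∃ h h' : T ≃ᵢ T, IsHyperbolicIsom h ∧ IsHyperbolicIsom h' ∧
        transLen (h.trans g) ≤ transLen h ∧ transLen (h'.trans g) ≤ transLen h' ∧
        transLen h + transLen h' < transLen (h'.trans h)) →
      ∃ x y : T, x ≠ y ∧ g x = x ∧ g y = y) ∧
    ∀ h h' : T ≃ᵢ T, IsHyperbolicIsom h → IsHyperbolicIsom h' →
      (∃ x y : T, x ≠ y ∧ g x = x ∧ g y = y) →
      ({x : T | g x = x} ∩ axisSet h).Nonempty →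
      ({x : T | g x = x} ∩ axisSet h').Nonempty →
      Disjoint (axisSet h) (axisSet h') →
      transLen (h.trans g) ≤ transLen h ∧ transLen (h'.trans g) ≤ transLen h' ∧
        transLen h + transLen h' < transLen (h'.trans h) := by
  constructor
  · rintro ⟨h, h', hyph, hyph', hle1, hle2, hlt⟩
    obtain ⟨x₀, hgx₀, hx₀⟩ := RTreeAux.n1 htree g h hgfix hyph hle1
    obtain ⟨y₀, hgy₀, hy₀⟩ := RTreeAux.n1 htree g h' hgfix hyph' hle2
    refine ⟨x₀, y₀, ?_, hgx₀, hgy₀⟩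
    intro heq
    have := RTreeAux.n2 (heq ▸ hx₀) hy₀
    linarith
  · rintro h h' hyph hyph' - ⟨p, hpfix, hpax⟩ ⟨p', hp'fix, hp'ax⟩ hdisj
    have hdisjf : ∀ x, x ∈ axisSet h → x ∈ axisSet h' → False := fun x hx hx' =>
      Set.disjoint_left.mp hdisj hx hx'
    exact ⟨RTreeAux.easy_ineq hpfix hpax, RTreeAux.easy_ineq hp'fix hp'ax,
      RTreeAux.n4 htree h h' hyph hyph' hdisjf⟩
end

section
/- Let T be an ℝ-tree and let g, h be isometries of T such that g is elliptic (fixes a point) and h is hyperbolic with axis A_h. If the fixed point set of g intersects A_h, then ‖gh‖_T ≤ ‖h‖_T. -/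
/-- Let T be an ℝ-tree and let g, h be isometries of T such that g is elliptic
(fixes a point) and h is hyperbolic with axis A_h. If the fixed point set of g intersects A_h,
then ‖gh‖_T ≤ ‖h‖_T. -/
theorem stmt17 {T : Type*} [MetricSpace T] [Nonempty T] (htree : IsRTree T)
    (g h : T ≃ᵢ T) (hg : ∃ x : T, g x = x) (hh : IsHyperbolicIsom h)
    (hmeet : ({x : T | g x = x} ∩ axisSet h).Nonempty) :
    transLen (h.trans g) ≤ transLen h := by
  obtain ⟨x, hgx, hax⟩ := hmeet
  have hbdd : BddBelow (Set.range fun y : T => dist y ((h.trans g) y)) :=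
    ⟨0, by rintro _ ⟨y, rfl⟩; exact dist_nonneg⟩
  have key : dist x ((h.trans g) x) = transLen h := by
    have : (h.trans g) x = g (h x) := rfl
    rw [this, ← hax]
    calc dist x (g (h x)) = dist (g x) (g (h x)) := by rw [hgx]
      _ = dist x (h x) := g.dist_eq x (h x)
  calc transLen (h.trans g) ≤ dist x ((h.trans g) x) := ciInf_le hbdd x
    _ = transLen h := key
end
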